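/- arXiv:1901.03725 — 5 statements merged into one kernel-verified Lean document; each statement's English description precedes it below -/
import Mathlib

section
/- Let m and d be integers with 1 ≤ m ≤ d, and let L ⊆ ℂ^4 be any 2-dimensional linear subspace (a line in P^3). Then the ℂ-vector space of homogeneous polynomials of degree d in ℂ[x_0,x_1,x_2,x_3] lying in I(L)^m has dimension binom(d+3,3) − (1/6)·m·(m+1)·(3d+5−2m); equivalently, vanishing to order m along a line imposes exactly c_{m,d} = (1/6)·m·(m+1)·(3d+5−2m) conditions on forms of degree d. -/
open MvPolynomial

noncomputable section

abbrev C4 : Type := Fin 4 → ℂ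
abbrev R3 : Type := MvPolynomial (Fin 4) ℂ

/-- The homogeneous ideal of the line in `P^3` corresponding to a linear subspace
`L ⊆ ℂ^4`: all polynomials vanishing identically on `L`. -/
def lineIdeal (L : Submodule ℂ C4) : Ideal R3 where
  carrier := {F | ∀ v ∈ L, eval v F = 0}
  add_mem' := by
    intro a b ha hb v hv
    simp [ha v hv, hb v hv]
  zero_mem' := by
    intro v hv
    simp
  smul_mem' := by
    intro c F hF v hv
    simp [smul_eq_mul, hF v hv]


def substL (u : C4 →ₗ[ℂ] C4) : R3 →ₐ[ℂ] R3 :=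
  aeval (fun j => ∑ i, MvPolynomial.C (u (Pi.single i 1) j) * X i)

lemma eval_substL (u : C4 →ₗ[ℂ] C4) (v : C4) (F : R3) :
    eval v (substL u F) = eval (u v) F := by
  have h1 : eval v (substL u F)
      = eval₂ ((eval v).comp MvPolynomial.C)
          (fun j => eval v (∑ i, MvPolynomial.C (u (Pi.single i 1) j) * X i)) F := by
    rw [substL, aeval_def, eval_eval₂]; rfl
  have hpt : (fun j => eval v (∑ i, MvPolynomial.C (u (Pi.single i 1) j) * X i)) = u v := by
    funext j
    have hv : v = ∑ i, v i • (Pi.single i 1 : C4) := by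
      funext k; simp [Finset.sum_apply, Pi.single_apply]
    rw [map_sum]
    conv_rhs => rw [hv, map_sum]
    simp [mul_comm]
  have hC : ((eval v).comp (MvPolynomial.C (σ := Fin 4))) = RingHom.id ℂ := by
    ext c; simp
  rw [h1, hpt, hC, eval₂_id]

lemma mem_lineIdeal_iff {L : Submodule ℂ C4} {F : R3} :
    F ∈ lineIdeal L ↔ ∀ v ∈ L, eval v F = 0 := Iff.rfl

lemma substL_isHomogeneous (u : C4 →ₗ[ℂ] C4) {F : R3} {d : ℕ}
    (hF : F.IsHomogeneous d) : (substL u F).IsHomogeneous d := by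
  have := hF.aeval (fun j => ∑ i, MvPolynomial.C (u (Pi.single i 1) j) * X i) (n := 1) ?_
  · simpa [substL] using this
  · intro j
    exact IsHomogeneous.sum _ _ _ fun i _ => isHomogeneous_C_mul_X _ _

lemma substL_mem_pow {L L' : Submodule ℂ C4} (u : C4 →ₗ[ℂ] C4)
    (hu : ∀ v ∈ L', u v ∈ L) {m : ℕ} {F : R3} (hF : F ∈ (lineIdeal L) ^ m) :
    substL u F ∈ (lineIdeal L') ^ m := by
  have hmap : Ideal.map (substL u).toRingHom (lineIdeal L) ≤ lineIdeal L' := by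
    rw [Ideal.map_le_iff_le_comap]
    intro G hG v hv
    rw [AlgHom.toRingHom_eq_coe] at *
    show eval v (substL u G) = 0
    rw [eval_substL]
    exact hG _ (hu v hv)
  have h2 : substL u F ∈ Ideal.map (substL u).toRingHom ((lineIdeal L) ^ m) :=
    Ideal.mem_map_of_mem _ hF
  rw [Ideal.map_pow] at h2
  exact Ideal.pow_right_mono hmap m h2

lemma substL_substL_symm (e : C4 ≃ₗ[ℂ] C4) (F : R3) :
    substL e.symm.toLinearMap (substL e.toLinearMap F) = F := by
  apply MvPolynomial.funext
  intro v
  rw [eval_substL, eval_substL]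
  simp

lemma substL_symm_substL (e : C4 ≃ₗ[ℂ] C4) (F : R3) :
    substL e.toLinearMap (substL e.symm.toLinearMap F) = F := by
  apply MvPolynomial.funext
  intro v
  rw [eval_substL, eval_substL]
  simp

lemma finrank_eq_of_equiv (m d : ℕ) (L L' : Submodule ℂ C4) (e : C4 ≃ₗ[ℂ] C4)
    (hfwd : ∀ v ∈ L', e v ∈ L) (hbwd : ∀ v ∈ L, e.symm v ∈ L') :
    Module.finrank ℂ ↥(homogeneousSubmodule (Fin 4) ℂ d ⊓
        Submodule.restrictScalars ℂ ((lineIdeal L) ^ m)) =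
    Module.finrank ℂ ↥(homogeneousSubmodule (Fin 4) ℂ d ⊓
        Submodule.restrictScalars ℂ ((lineIdeal L') ^ m)) := by
  set V := homogeneousSubmodule (Fin 4) ℂ d ⊓
      Submodule.restrictScalars ℂ ((lineIdeal L) ^ m) with hV
  set V' := homogeneousSubmodule (Fin 4) ℂ d ⊓
      Submodule.restrictScalars ℂ ((lineIdeal L') ^ m) with hV'
  have hf : ∀ x ∈ V, substL e.toLinearMap x ∈ V' := by
    rintro x ⟨hx1, hx2⟩
    exact ⟨substL_isHomogeneous _ hx1, substL_mem_pow _ hfwd hx2⟩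
  have hg : ∀ x ∈ V', substL e.symm.toLinearMap x ∈ V := by
    rintro x ⟨hx1, hx2⟩
    refine ⟨substL_isHomogeneous _ hx1, substL_mem_pow _ ?_ hx2⟩
    intro v hv
    exact hbwd v hv
  refine LinearEquiv.finrank_eq
    (LinearEquiv.ofLinear ((substL e.toLinearMap).toLinearMap.restrict hf)
      ((substL e.symm.toLinearMap).toLinearMap.restrict hg) ?_ ?_)
  · ext x
    exact congrArg _ (substL_symm_substL e x)
  · ext x
    exact congrArg _ (substL_substL_symm e x)

def L0 : Submodule ℂ C4 := Submodule.span ℂ {Pi.single 0 1, Pi.single 1 1}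

lemma mem_L0_iff {v : C4} : v ∈ L0 ↔ v 2 = 0 ∧ v 3 = 0 := by
  constructor
  · intro hv
    rw [L0, Submodule.mem_span_pair] at hv
    obtain ⟨a, b, rfl⟩ := hv
    constructor <;> simp [Pi.single_apply]
  · rintro ⟨h2, h3⟩
    rw [L0, Submodule.mem_span_pair]
    refine ⟨v 0, v 1, ?_⟩
    funext k
    fin_cases k <;> simp [Pi.single_apply, h2, h3]

lemma exists_equiv_map_eq (L : Submodule ℂ C4) (hL : Module.finrank ℂ L = 2) :
    ∃ e : C4 ≃ₗ[ℂ] C4, Submodule.map (e : C4 →ₗ[ℂ] C4) L = L0 := by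
  obtain ⟨Lc, hc⟩ := Submodule.exists_isCompl L
  have hC4 : Module.finrank ℂ C4 = 4 := by
    simp [Module.finrank_pi]
  have hLc : Module.finrank ℂ ↥Lc = 2 := by
    have := Submodule.finrank_add_eq_of_isCompl hc
    omega
  let bL := Module.finBasisOfFinrankEq ℂ L hL
  let bC := Module.finBasisOfFinrankEq ℂ Lc hLc
  let φ := Submodule.prodEquivOfIsCompl L Lc hc
  let b : Module.Basis (Fin 4) ℂ C4 := ((bL.prod bC).map φ).reindex finSumFinEquiv
  let e := b.equiv (Pi.basisFun ℂ (Fin 4)) (Equiv.refl _)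
  refine ⟨e, ?_⟩
  have hbval : ∀ i : Fin 2, (bL i : C4) = b (finSumFinEquiv (m := 2) (n := 2) (Sum.inl i)) := by
    intro i
    rw [Module.Basis.reindex_apply, Equiv.symm_apply_apply, Module.Basis.map_apply]
    have hp : (bL.prod bC) (Sum.inl i) = (bL i, (0 : Lc)) :=
      Prod.ext (Module.Basis.prod_apply_inl_fst _ _ _) (Module.Basis.prod_apply_inl_snd _ _ _)
    rw [hp, Submodule.coe_prodEquivOfIsCompl']
    simp
  have key : ∀ i : Fin 2, e (bL i : C4) = Pi.single ((finSumFinEquiv (m := 2) (n := 2) (Sum.inl i) : Fin 4)) 1 := by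
    intro i
    rw [hbval i]
    show (b.equiv (Pi.basisFun ℂ (Fin 4)) (Equiv.refl _)) _ = _
    rw [Module.Basis.equiv_apply]
    simp
  have hLspan : L = Submodule.span ℂ (Set.range (fun i : Fin 2 => (bL i : C4))) := by
    conv_lhs => rw [← Submodule.map_subtype_top L, ← bL.span_eq, Submodule.map_span]
    congr 1
    rw [← Set.range_comp]
    rfl
  rw [hLspan, Submodule.map_span, ← Set.range_comp]
  have : (⇑(e : C4 →ₗ[ℂ] C4) ∘ fun i : Fin 2 => (bL i : C4)) =
      fun i : Fin 2 => Pi.single ((finSumFinEquiv (m := 2) (n := 2) (Sum.inl i) : Fin 4)) 1 := by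
    funext i
    exact key i
  rw [this]
  have hrange : (Set.range fun i : Fin 2 => (Pi.single ((finSumFinEquiv (m := 2) (n := 2) (Sum.inl i) : Fin 4)) 1 : C4))
      = {Pi.single 0 1, Pi.single 1 1} := by
    ext x
    constructor
    · rintro ⟨i, rfl⟩
      fin_cases i
      · left; rfl
      · right; rfl
    · rintro (rfl | rfl)
      · exact ⟨0, rfl⟩
      · exact ⟨1, rfl⟩
  rw [hrange]
  rfl

lemma eval_aeval' (w : C4) (g : Fin 4 → R3) (F : R3) :
    eval w (aeval g F) = eval (fun i => eval w (g i)) F := by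
  rw [aeval_def, eval_eval₂]
  rw [show ((eval w).comp (algebraMap ℂ R3)) = RingHom.id ℂ from
    RingHom.ext fun c => by simp [algebraMap_eq], eval₂_id]

def gkill : Fin 4 → R3 := fun i => if i = 2 then 0 else if i = 3 then 0 else X i

lemma lineIdeal_L0 : lineIdeal L0 = Ideal.span {X 2, X 3} := by
  apply le_antisymm
  · intro F hF
    have hψ : aeval gkill F = 0 := by
      apply MvPolynomial.funext
      intro w
      rw [eval_aeval']
      have hmem : (fun i => eval w (gkill i)) ∈ L0 := by
        rw [mem_L0_iff]
        constructor <;> simp [gkill]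
      simpa using hF _ hmem
    have hsub : F - aeval gkill F ∈ Ideal.span ({X 2, X 3} : Set R3) := by
      have hrw : F - aeval gkill F = ∑ σ ∈ F.support,
          (monomial σ (coeff σ F) - aeval gkill (monomial σ (coeff σ F))) := by
        conv_lhs => rw [← F.support_sum_monomial_coeff]
        rw [map_sum, ← Finset.sum_sub_distrib]
      rw [hrw]
      apply Ideal.sum_mem
      intro σ _
      by_cases h23 : σ 2 = 0 ∧ σ 3 = 0
      · have : aeval gkill (monomial σ (coeff σ F)) = monomial σ (coeff σ F) := by
          rw [aeval_monomial]
          have hprod : (σ.prod fun n e => gkill n ^ e) = σ.prod fun n e => X n ^ e := by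
            apply Finset.prod_congr rfl
            intro i hi
            have hi2 : i ≠ 2 := by rintro rfl; exact (Finsupp.mem_support_iff.mp hi) h23.1
            have hi3 : i ≠ 3 := by rintro rfl; exact (Finsupp.mem_support_iff.mp hi) h23.2
            simp [gkill, hi2, hi3]
          rw [hprod]
          show MvPolynomial.C (coeff σ F) * _ = _
          rw [Finsupp.prod, prod_X_pow_eq_monomial, C_mul_monomial, mul_one]
        rw [this, sub_self]
        exact Ideal.zero_mem _
      · have hψ0 : aeval gkill (monomial σ (coeff σ F)) = 0 := by
          rw [aeval_monomial]
          have : (σ.prod fun n e => gkill n ^ e) = 0 := by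
            rw [Finsupp.prod]
            rcases not_and_or.mp h23 with h | h
            · apply Finset.prod_eq_zero (Finsupp.mem_support_iff.mpr h)
              simp [gkill, zero_pow h]
            · apply Finset.prod_eq_zero (Finsupp.mem_support_iff.mpr h)
              simp [gkill, zero_pow h]
          rw [this, mul_zero]
        rw [hψ0, sub_zero]
        rcases not_and_or.mp h23 with h | h
        · have hσ : Finsupp.single (2 : Fin 4) 1 + (σ - Finsupp.single 2 1) = σ := by
            ext j
            by_cases hj : j = 2
            · subst hj; simp [Finsupp.single_apply]; omega
            · simp [Finsupp.single_apply, hj, Ne.symm hj]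
          rw [show (monomial σ (coeff σ F) : R3)
              = X 2 ^ 1 * monomial (σ - Finsupp.single 2 1) (coeff σ F) by
            rw [← monomial_single_add, hσ]]
          rw [pow_one]
          exact Ideal.mul_mem_right _ _ (Ideal.subset_span (by left; rfl))
        · have hσ : Finsupp.single (3 : Fin 4) 1 + (σ - Finsupp.single 3 1) = σ := by
            ext j
            by_cases hj : j = 3
            · subst hj; simp [Finsupp.single_apply]; omega
            · simp [Finsupp.single_apply, hj, Ne.symm hj]
          rw [show (monomial σ (coeff σ F) : R3)
              = X 3 ^ 1 * monomial (σ - Finsupp.single 3 1) (coeff σ F) by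
            rw [← monomial_single_add, hσ]]
          rw [pow_one]
          exact Ideal.mul_mem_right _ _ (Ideal.subset_span (by right; rfl))
    rw [hψ, sub_zero] at hsub
    exact hsub
  · rw [Ideal.span_le]
    rintro G (rfl | rfl) <;> intro v hv
    · rw [eval_X]; exact (mem_L0_iff.mp hv).1
    · rw [eval_X]; exact (mem_L0_iff.mp hv).2

lemma support_mem_span_pair {F : R3} (hF : F ∈ Ideal.span ({X 2, X 3} : Set R3)) :
    ∀ σ ∈ F.support, 1 ≤ σ 2 + σ 3 := by
  have himg : ({X 2, X 3} : Set R3) = MvPolynomial.X '' ({2, 3} : Set (Fin 4)) := by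
    rw [Set.image_pair]
  rw [himg] at hF
  intro σ hσ
  obtain ⟨i, hi, hne⟩ := mem_ideal_span_X_image.mp hF σ hσ
  rcases hi with rfl | rfl
  · omega
  · omega

lemma support_mem_pow {m : ℕ} {F : R3}
    (hF : F ∈ (Ideal.span ({X 2, X 3} : Set R3)) ^ m) :
    ∀ σ ∈ F.support, m ≤ σ 2 + σ 3 := by
  induction m generalizing F with
  | zero => intro σ _; omega
  | succ m ih =>
    rw [pow_succ] at hF
    refine Submodule.mul_induction_on hF ?_ ?_
    · intro a ha b hb σ hσ
      have := MvPolynomial.support_mul a b hσ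
      rw [Finset.mem_add] at this
      obtain ⟨τ, hτ, ρ, hρ, rfl⟩ := this
      have h1 := ih ha τ hτ
      have h2 := support_mem_span_pair hb ρ hρ
      simp only [Finsupp.add_apply]
      omega
    · intro a b ha hb σ hσ
      rcases Finset.mem_union.mp (MvPolynomial.support_add hσ) with h | h
      · exact ha σ h
      · exact hb σ h

lemma monomial_mem_pow {σ : Fin 4 →₀ ℕ} {m : ℕ} (h : m ≤ σ 2 + σ 3) (c : ℂ) :
    monomial σ c ∈ (Ideal.span ({X 2, X 3} : Set R3)) ^ m := by
  have hσ : σ = (Finsupp.single 0 (σ 0) + Finsupp.single 1 (σ 1))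
      + (Finsupp.single 2 (σ 2) + Finsupp.single 3 (σ 3)) := by
    ext j
    fin_cases j <;> simp [Finsupp.single_apply]
  have hmul : (monomial σ c : R3)
      = monomial (Finsupp.single 0 (σ 0) + Finsupp.single 1 (σ 1)) c
        * (X 2 ^ σ 2 * X 3 ^ σ 3) := by
    rw [X_pow_eq_monomial, X_pow_eq_monomial, monomial_mul, monomial_mul, one_mul, mul_one]
    rw [← hσ]
  rw [hmul]
  apply Ideal.mul_mem_left
  have h2 : (X 2 : R3) ∈ Ideal.span ({X 2, X 3} : Set R3) :=
    Ideal.subset_span (by left; rfl)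
  have h3 : (X 3 : R3) ∈ Ideal.span ({X 2, X 3} : Set R3) :=
    Ideal.subset_span (by right; rfl)
  have : (X 2 ^ σ 2 * X 3 ^ σ 3 : R3)
      ∈ (Ideal.span ({X 2, X 3} : Set R3)) ^ (σ 2 + σ 3) := by
    rw [pow_add]
    exact Submodule.mul_mem_mul (Ideal.pow_mem_pow h2 _) (Ideal.pow_mem_pow h3 _)
  exact Ideal.pow_le_pow_right h this

def Amd (m d : ℕ) : Finset (Fin 4 →₀ ℕ) :=
  ((Finset.Nat.antidiagonalTuple 4 d).filter (fun f => m ≤ f 2 + f 3)).image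
    Finsupp.equivFunOnFinite.symm

lemma degree_eq_sum_univ (σ : Fin 4 →₀ ℕ) : σ.degree = ∑ i, σ i := by
  rw [Finsupp.degree]
  exact Finset.sum_subset (Finset.subset_univ _)
    (fun i _ hi => Finsupp.notMem_support_iff.mp hi)

lemma mem_Amd {m d : ℕ} {σ : Fin 4 →₀ ℕ} :
    σ ∈ Amd m d ↔ (∑ i, σ i) = d ∧ m ≤ σ 2 + σ 3 := by
  simp only [Amd, Finset.mem_image, Finset.mem_filter, Finset.Nat.mem_antidiagonalTuple]
  constructor
  · rintro ⟨f, ⟨hsum, hge⟩, rfl⟩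
    exact ⟨by simpa using hsum, by simpa using hge⟩
  · rintro ⟨hsum, hge⟩
    exact ⟨σ, ⟨by simpa using hsum, by simpa using hge⟩, by simp⟩

lemma V0_eq_span (m d : ℕ) :
    homogeneousSubmodule (Fin 4) ℂ d ⊓
        Submodule.restrictScalars ℂ ((lineIdeal L0) ^ m)
      = Submodule.span ℂ ((fun σ => (monomial σ (1:ℂ) : R3)) '' (Amd m d)) := by
  apply le_antisymm
  · rintro F ⟨hhom, hpow⟩
    have hpow' : F ∈ (Ideal.span ({X 2, X 3} : Set R3)) ^ m := by
      rwa [← lineIdeal_L0]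
    have hFs : (∑ σ ∈ F.support, (monomial σ (coeff σ F) : R3))
        ∈ Submodule.span ℂ ((fun σ => (monomial σ (1:ℂ) : R3)) '' (Amd m d)) := by
      apply Submodule.sum_mem
      intro σ hσ
      have hc : coeff σ F ≠ 0 := MvPolynomial.mem_support_iff.mp hσ
      have hdeg : (∑ i, σ i) = d := by
        have := (mem_homogeneousSubmodule d F).mp hhom hc
        rw [← degree_eq_sum_univ, Finsupp.degree_eq_weight_one]
        exact this
      have hge : m ≤ σ 2 + σ 3 := support_mem_pow hpow' σ hσ
      rw [show (monomial σ (coeff σ F) : R3) = (coeff σ F) • monomial σ (1:ℂ) by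
        rw [MvPolynomial.smul_monomial, smul_eq_mul, mul_one]]
      exact Submodule.smul_mem _ _
        (Submodule.subset_span ⟨σ, mem_Amd.mpr ⟨hdeg, hge⟩, rfl⟩)
    rwa [F.support_sum_monomial_coeff] at hFs
  · rw [Submodule.span_le]
    rintro x ⟨σ, hσ, rfl⟩
    obtain ⟨hdeg, hge⟩ := mem_Amd.mp hσ
    constructor
    · exact isHomogeneous_monomial _ (by rw [degree_eq_sum_univ]; exact hdeg)
    · show monomial σ (1:ℂ) ∈ (lineIdeal L0) ^ m
      rw [lineIdeal_L0]
      exact monomial_mem_pow hge 1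

lemma finrank_V0 (m d : ℕ) :
    Module.finrank ℂ ↥(homogeneousSubmodule (Fin 4) ℂ d ⊓
        Submodule.restrictScalars ℂ ((lineIdeal L0) ^ m)) = (Amd m d).card := by
  rw [V0_eq_span]
  have himg : ((fun σ => (monomial σ (1:ℂ) : R3)) '' (Amd m d))
      = ↑((Amd m d).image (fun σ => (monomial σ (1:ℂ) : R3))) := by
    rw [Finset.coe_image]
  rw [himg]
  rw [finrank_span_finset_eq_card]
  · exact Finset.card_image_of_injective _ (monomial_left_injective one_ne_zero)
  · refine (fun (h' : ((Amd m d).image (fun σ => (monomial σ (1:ℂ) : R3)) : Set R3) ⊆ Set.range (fun σ : Fin 4 →₀ ℕ => (monomial σ (1:ℂ) : R3)))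
        (hs : LinearIndepOn ℂ id (Set.range (fun σ : Fin 4 →₀ ℕ => (monomial σ (1:ℂ) : R3)))) => hs.mono h') ?_ ?_
    · intro x hx
      rw [Finset.coe_image] at hx
      obtain ⟨σ, _, rfl⟩ := hx
      exact ⟨σ, rfl⟩
    · have hli := (MvPolynomial.basisMonomials (Fin 4) ℂ).linearIndependent
      rw [MvPolynomial.coe_basisMonomials] at hli
      exact (linearIndepOn_id_range_iff hli.injective).mpr hli

lemma card_filter_eq (m d : ℕ) (hmd : m ≤ d) :
    ((Finset.Nat.antidiagonalTuple 4 d).filter (fun f => m ≤ f 2 + f 3)).card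
      = ∑ k ∈ Finset.Icc m d, (k + 1) * (d - k + 1) := by
  have hcard : ((Finset.Icc m d).sigma
      (fun k => (Finset.range (k+1)) ×ˢ (Finset.range (d - k + 1)))).card
      = ∑ k ∈ Finset.Icc m d, (k + 1) * (d - k + 1) := by
    rw [Finset.card_sigma]
    exact Finset.sum_congr rfl fun k _ => by
      rw [Finset.card_product, Finset.card_range, Finset.card_range]
  rw [← hcard]
  refine Finset.card_bij'
    (i := fun f _ => (⟨f 2 + f 3, (f 2, f 0)⟩ : Σ _ : ℕ, ℕ × ℕ))
    (j := fun p _ => ![p.2.2, d - p.1 - p.2.2, p.2.1, p.1 - p.2.1]) ?_ ?_ ?_ ?_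
  · intro f hf
    rw [Finset.mem_filter, Finset.Nat.mem_antidiagonalTuple] at hf
    obtain ⟨hsum, hge⟩ := hf
    rw [Fin.sum_univ_four] at hsum
    simp only [Finset.mem_sigma, Finset.mem_Icc, Finset.mem_product, Finset.mem_range]
    omega
  · intro p hp
    simp only [Finset.mem_sigma, Finset.mem_Icc, Finset.mem_product,
      Finset.mem_range] at hp
    rw [Finset.mem_filter, Finset.Nat.mem_antidiagonalTuple, Fin.sum_univ_four]
    simp only [Matrix.cons_val_zero, Matrix.cons_val_one, Matrix.head_cons,
      Matrix.cons_val_two, Matrix.tail_cons, Matrix.cons_val_three]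
    omega
  · intro f hf
    rw [Finset.mem_filter, Finset.Nat.mem_antidiagonalTuple] at hf
    obtain ⟨hsum, hge⟩ := hf
    rw [Fin.sum_univ_four] at hsum
    funext x
    fin_cases x <;> simp <;> omega
  · rintro ⟨k, i2, i0⟩ hp
    simp only [Finset.mem_sigma, Finset.mem_Icc, Finset.mem_product,
      Finset.mem_range] at hp
    obtain ⟨hk, h1, h2⟩ := hp
    simp only [Matrix.cons_val_zero, Matrix.cons_val_one, Matrix.head_cons,
      Matrix.cons_val_two, Matrix.tail_cons, Matrix.cons_val_three]
    have h3 : i2 + (k - i2) = k := by omega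
    rw [h3]

lemma sum_range_id (d : ℕ) : ∀ n : ℕ,
    6 * ∑ k ∈ Finset.range n, (((k:ℤ)+1)*((d:ℤ)-(k:ℤ)+1)) = n*(n+1)*(3*(d:ℤ)+5-2*n) := by
  intro n
  induction n with
  | zero => simp
  | succ n ih =>
    rw [Finset.sum_range_succ, mul_add, ih]
    push_cast
    ring

lemma two_choose_two : ∀ n : ℕ, 2 * ((n+2).choose 2) = (n+2)*(n+1) := by
  intro n
  induction n with
  | zero => decide
  | succ n ih =>
    rw [show n+1+2 = (n+2)+1 from rfl, Nat.choose_succ_succ, Nat.choose_one_right,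
      mul_add, ih]
    ring

lemma six_choose_three : ∀ d : ℕ, 6 * ((d+3).choose 3) = (d+1)*(d+2)*(d+3) := by
  intro d
  induction d with
  | zero => decide
  | succ d ih =>
    rw [show d+1+3 = (d+3)+1 from rfl, Nat.choose_succ_succ, mul_add, ih,
      show d+3 = (d+1)+2 from rfl, show (6:ℕ) = 3*2 from rfl, mul_assoc,
      two_choose_two]
    ring

lemma sum_Icc_eq (m d : ℕ) (hmd : m ≤ d) :
    6 * ((∑ k ∈ Finset.Icc m d, (k + 1) * (d - k + 1) : ℕ) : ℤ)
      = 6 * (((d + 3).choose 3 : ℕ) : ℤ)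
        - (m : ℤ) * ((m : ℤ) + 1) * (3 * (d : ℤ) + 5 - 2 * (m : ℤ)) := by
  have hcast : ((∑ k ∈ Finset.Icc m d, (k + 1) * (d - k + 1) : ℕ) : ℤ)
      = ∑ k ∈ Finset.Icc m d, (((k:ℤ)+1)*((d:ℤ)-(k:ℤ)+1)) := by
    push_cast
    apply Finset.sum_congr rfl
    intro k hk
    have hkd : k ≤ d := (Finset.mem_Icc.mp hk).2
    congr 1
    omega
  rw [hcast]
  have hIco : Finset.Icc m d = Finset.Ico m (d+1) := by
    rw [Finset.Ico_add_one_right_eq_Icc]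
  rw [hIco, Finset.sum_Ico_eq_sub _ (by omega : m ≤ d + 1), mul_sub,
    sum_range_id, sum_range_id]
  have h6 : (((d + 3).choose 3 : ℕ) : ℤ) * 6 = ((d:ℤ)+1)*((d:ℤ)+2)*((d:ℤ)+3) := by
    have := six_choose_three d
    have : ((6 * ((d+3).choose 3) : ℕ) : ℤ) = (((d+1)*(d+2)*(d+3) : ℕ) : ℤ) := by
      rw [this]
    push_cast at this
    linarith
  push_cast
  linarith [h6]

/-- Vanishing to order `m` along a line imposes exactly
`c_{m,d} = m(m+1)(3d+5-2m)/6` conditions on forms of degree `d ≥ m`: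
the space of degree-`d` forms in `I(L)^m` has dimension
`binom(d+3,3) - m(m+1)(3d+5-2m)/6`. (Stated multiplied through by 6, in `ℤ`.) -/
theorem stmt_0 (m d : ℕ) (hm : 1 ≤ m) (hmd : m ≤ d)
    (L : Submodule ℂ C4) (hL : Module.finrank ℂ ↥L = 2) :
    6 * (Module.finrank ℂ
        ↥(homogeneousSubmodule (Fin 4) ℂ d ⊓
          Submodule.restrictScalars ℂ ((lineIdeal L) ^ m)) : ℤ) =
      6 * ((d + 3).choose 3 : ℤ) -
        (m : ℤ) * ((m : ℤ) + 1) * (3 * (d : ℤ) + 5 - 2 * (m : ℤ)) := by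
  obtain ⟨e, he⟩ := exists_equiv_map_eq L hL
  have hfwd : ∀ v ∈ L0, e.symm v ∈ L := by
    intro v hv
    rw [← he] at hv
    obtain ⟨w, hw, rfl⟩ := hv
    simpa using hw
  have hbwd : ∀ v ∈ L, e.symm.symm v ∈ L0 := by
    intro v hv
    rw [LinearEquiv.symm_symm, ← he]
    exact ⟨v, hv, rfl⟩
  have h1 := finrank_eq_of_equiv m d L L0 e.symm hfwd hbwd
  have h2 : (Amd m d).card = ∑ k ∈ Finset.Icc m d, (k + 1) * (d - k + 1) := by
    rw [Amd, Finset.card_image_of_injective _ (Equiv.injective _), card_filter_eq m d hmd]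
  rw [h1, finrank_V0, h2]
  exact sum_Icc_eq m d hmd
end
end

section
/- Let L_1, L_2, L_3, L_4 ⊆ ℂ^4 be 2-dimensional linear subspaces (lines in P^3) which are pairwise disjoint. Then there exists a nonzero homogeneous polynomial of degree 3 in ℂ[x_0,x_1,x_2,x_3] vanishing identically on all four lines; that is, the system 𝓛_3(1,1,1,1) of cubic surfaces containing four pairwise skew lines is nonempty. -/
open MvPolynomial

noncomputable section

/-! ### Auxiliary results: dimension of spaces of homogeneous polynomials -/

/-- Degree-`m` exponent vectors on `Fin n` correspond to antidiagonal tuples. -/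
def degEquiv (n m : ℕ) :
    {d : Fin n →₀ ℕ // d ∈ {d : Fin n →₀ ℕ | d.degree = m}} ≃
      (Finset.Nat.antidiagonalTuple n m : Finset (Fin n → ℕ)) :=
  (Finsupp.equivFunOnFinite (α := Fin n) (M := ℕ)).subtypeEquiv (fun d => by
    simp only [Set.mem_setOf_eq, Finset.mem_coe, Finset.Nat.mem_antidiagonalTuple]
    constructor
    · intro h
      rw [← h, Finsupp.degree]
      exact (Finset.sum_subset (Finset.subset_univ _)
        (fun i _ hi => Finsupp.notMem_support_iff.mp hi)).symm
    · intro h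
      rw [Finsupp.degree_apply, Finset.sum_subset (Finset.subset_univ _)
        (fun i _ hi => Finsupp.notMem_support_iff.mp hi)] <;> exact h)

instance degFintype (n m : ℕ) :
    Fintype {d : Fin n →₀ ℕ // d ∈ {d : Fin n →₀ ℕ | d.degree = m}} :=
  Fintype.ofEquiv _ (degEquiv n m).symm

/-- Monomial basis of the space of homogeneous polynomials of degree `m`. -/
def homBasis (n m : ℕ) :
    Module.Basis {d : Fin n →₀ ℕ // d ∈ {d : Fin n →₀ ℕ | d.degree = m}} ℂ
      (homogeneousSubmodule (Fin n) ℂ m) :=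
  (MvPolynomial.basisRestrictSupport ℂ _).map
    (LinearEquiv.ofEq _ _ (homogeneousSubmodule_eq_finsupp_supported ℂ m (σ := Fin n)).symm)

instance homFD (n m : ℕ) : FiniteDimensional ℂ (homogeneousSubmodule (Fin n) ℂ m) :=
  Module.Finite.of_basis (homBasis n m)

lemma finrank_hom (n m : ℕ) :
    Module.finrank ℂ (homogeneousSubmodule (Fin n) ℂ m) =
      (Finset.Nat.antidiagonalTuple n m).card := by
  rw [Module.finrank_eq_card_basis (homBasis n m), Fintype.card_congr (degEquiv n m),
    Fintype.card_coe]

/-! ### Restriction of a polynomial to a plane spanned by two vectors -/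

/-- Substituting the generic point `s • b 0 + t • b 1` of the plane spanned by `b`
into a polynomial on `ℂ^4`, yielding a polynomial in two variables. -/
def restrictMap (b : Fin 2 → C4) : R3 →ₐ[ℂ] MvPolynomial (Fin 2) ℂ :=
  aeval (fun k => ∑ j, C (b j k) * X j)

lemma restrictMap_homogeneous (b : Fin 2 → C4) {F : R3} {m : ℕ} (hF : F.IsHomogeneous m) :
    (restrictMap b F).IsHomogeneous m := by
  have := hF.aeval (fun k => ∑ j : Fin 2, C (b j k) * X j) (n := 1) (fun k => by
    apply IsHomogeneous.sum
    intro j _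
    simpa using (isHomogeneous_C_mul_X_pow (b j k) j 1))
  rw [one_mul] at this
  exact this

lemma eval_restrictMap (b : Fin 2 → C4) (F : R3) (c : Fin 2 → ℂ) :
    eval c (restrictMap b F) = eval (∑ j, c j • b j) F := by
  rw [restrictMap, aeval_def, eval_eval₂]
  congr 1
  · ext x
    simp [algebraMap_eq]
  · funext k
    simp only [map_sum, eval_mul, eval_C, eval_X, Finset.sum_apply, Pi.smul_apply,
      smul_eq_mul]
    exact Finset.sum_congr rfl (fun j _ => mul_comm _ _)

/-- The system `𝓛_3(1,1,1,1)` of cubic surfaces through four pairwise skew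
lines in `P^3` is nonempty: there is a nonzero cubic form vanishing on all four lines. -/
theorem stmt_3 (L : Fin 4 → Submodule ℂ C4)
    (hdim : ∀ i, Module.finrank ℂ ↥(L i) = 2)
    (hskew : ∀ i j, i ≠ j → L i ⊓ L j = ⊥) :
    ∃ F : R3, F ≠ 0 ∧ F.IsHomogeneous 3 ∧ ∀ i, F ∈ lineIdeal (L i) := by
  classical
  set H := homogeneousSubmodule (Fin 4) ℂ 3 with hH
  set W := homogeneousSubmodule (Fin 2) ℂ 3 with hW
  -- bases of the four planes
  let bb : ∀ i, Module.Basis (Fin 2) ℂ (L i) :=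
    fun i => Module.finBasisOfFinrankEq ℂ (L i) (hdim i)
  let b : Fin 4 → Fin 2 → C4 := fun i j => (bb i j : C4)
  -- the restriction linear maps and the total map Φ
  let ψ : Fin 4 → (H →ₗ[ℂ] W) := fun i =>
    LinearMap.codRestrict W ((restrictMap (b i)).toLinearMap.comp H.subtype)
      (fun F => restrictMap_homogeneous (b i) F.2)
  let Φ : H →ₗ[ℂ] (Fin 4 → W) := LinearMap.pi ψ
  -- dimension count: 20 > 16
  have hcard4 : (Finset.Nat.antidiagonalTuple 4 3).card = 20 := by decide
  have hcard2 : (Finset.Nat.antidiagonalTuple 2 3).card = 4 := by decide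
  have hrk : Module.finrank ℂ (Fin 4 → W) < Module.finrank ℂ H := by
    have h1 : Module.finrank ℂ W = 4 := by rw [hW, finrank_hom, hcard2]
    rw [hH, finrank_hom, hcard4, Module.finrank_pi_fintype ℂ]
    simp [h1]
  -- Φ is not injective
  have hnotinj : ¬ Function.Injective Φ := by
    intro h
    exact absurd (LinearMap.finrank_le_finrank_of_injective h) (by omega)
  rw [Function.not_injective_iff] at hnotinj
  obtain ⟨x, y, hxy, hne⟩ := hnotinj
  refine ⟨(x - y : H), ?_, ?_, ?_⟩
  · exact fun h => hne (sub_eq_zero.mp (Subtype.ext h))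
  · exact (x - y).2
  · intro i v hv
    have hΦ : Φ (x - y) = 0 := by rw [map_sub, hxy, sub_self]
    have h0 : ψ i (x - y) = 0 := congrFun hΦ i
    have hres : restrictMap (b i) ((x - y : H) : R3) = 0 := congrArg Subtype.val h0
    set u : L i := ⟨v, hv⟩ with hu
    have hv' : (∑ j, (bb i).repr u j • b i j) = v := by
      calc (∑ j, (bb i).repr u j • b i j)
          = ((∑ j, (bb i).repr u j • bb i j : L i) : C4) := by
            push_cast [Submodule.coe_sum]
            rfl
        _ = (u : C4) := by rw [(bb i).sum_repr u]
        _ = v := rfl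
    rw [← hv', ← eval_restrictMap, hres, map_zero]
end
end

section
/- Let L_1, L_2, L_3, L_4 ⊆ ℂ^4 be 2-dimensional linear subspaces (lines in P^3) which are pairwise disjoint, and let m ≥ 1 be an integer. Then there exists a nonzero homogeneous polynomial F of degree 3m in ℂ[x_0,x_1,x_2,x_3] with F ∈ I(L_i)^m for i = 1,2,3,4. Moreover, for every m ≥ 8 one has binom(3m+3,3) < (2/3)·m·(m+1)·(7m+5), so for m ≥ 8 the linear system 𝓛_{3m}(m,m,m,m) is nonempty despite having negative virtual dimension, hence special. -/
open MvPolynomial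

noncomputable section

namespace Stmt4Aux

def expMat : Fin 20 → Fin 4 → ℕ :=
  ![![3,0,0,0], ![0,3,0,0], ![0,0,3,0], ![0,0,0,3],
    ![2,1,0,0], ![2,0,1,0], ![2,0,0,1], ![1,2,0,0], ![0,2,1,0], ![0,2,0,1],
    ![1,0,2,0], ![0,1,2,0], ![0,0,2,1], ![1,0,0,2], ![0,1,0,2], ![0,0,1,2],
    ![1,1,1,0], ![1,1,0,1], ![1,0,1,1], ![0,1,1,1]]

lemma expMat_inj : Function.Injective expMat := by decide

lemma expMat_sum : ∀ k, expMat k 0 + expMat k 1 + expMat k 2 + expMat k 3 = 3 := by decide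

lemma degree_eq {n : ℕ} (d : Fin n →₀ ℕ) : d.degree = ∑ i, d i :=
  Finset.sum_subset (Finset.subset_univ _)
    (fun i _ hi => Finsupp.notMem_support_iff.mp hi)

lemma eval_aeval' (x : Fin 2 → ℂ) (g : Fin 4 → MvPolynomial (Fin 2) ℂ) (F : R3) :
    eval x (aeval g F) = eval (fun s => eval x (g s)) F := by
  rw [aeval_def, eval_eval₂]
  have h : (eval x).comp (algebraMap ℂ (MvPolynomial (Fin 2) ℂ)) = RingHom.id ℂ := by
    ext r; simp
  rw [h, eval₂_id]

lemma exists_cubic (L : Fin 4 → Submodule ℂ C4)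
    (hdim : ∀ i, Module.finrank ℂ ↥(L i) = 2) :
    ∃ F : R3, F ≠ 0 ∧ F.IsHomogeneous 3 ∧ ∀ i, ∀ w ∈ L i, eval w F = 0 := by
  -- spanning pairs of vectors for each line
  have hUV : ∀ i : Fin 4, ∃ u v : C4, ∀ w ∈ L i, ∃ a b : ℂ, w = a • u + b • v := by
    intro i
    let b := Module.finBasisOfFinrankEq ℂ ↥(L i) (hdim i)
    refine ⟨(b 0 : C4), (b 1 : C4), fun w hw => ?_⟩
    refine ⟨b.repr ⟨w, hw⟩ 0, b.repr ⟨w, hw⟩ 1, ?_⟩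
    have h : (↑(∑ j : Fin 2, (b.repr ⟨w, hw⟩) j • b j) : C4) = w :=
      congrArg (Subtype.val) (b.sum_repr ⟨w, hw⟩)
    conv_lhs => rw [← h]
    simp only [Fin.sum_univ_two, Submodule.coe_add, SetLike.val_smul]
  choose u v huv using hUV
  -- the linear-algebra setup
  let expF : Fin 20 → (Fin 4 →₀ ℕ) := fun k => Finsupp.equivFunOnFinite.symm (expMat k)
  have hexpF_inj : Function.Injective expF :=
    fun a b h => expMat_inj (Finsupp.equivFunOnFinite.symm.injective h)
  have hdeg : ∀ k, (expF k).degree = 3 := by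
    intro k
    rw [degree_eq]
    simpa [expF, Fin.sum_univ_four] using expMat_sum k
  let σl : Fin 4 → Fin 4 → MvPolynomial (Fin 2) ℂ :=
    fun i j => C (u i j) * X 0 + C (v i j) * X 1
  let dexp : Fin 4 → (Fin 2 →₀ ℕ) :=
    fun k => Finsupp.single 0 (k : ℕ) + Finsupp.single 1 (3 - (k : ℕ))
  let M : (Fin 20 → ℂ) →ₗ[ℂ] R3 :=
    ∑ k : Fin 20, (MvPolynomial.monomial (expF k)).comp (LinearMap.proj k)
  let Ψ : (Fin 20 → ℂ) →ₗ[ℂ] (Fin 4 × Fin 4 → ℂ) :=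
    LinearMap.pi fun q =>
      (MvPolynomial.lcoeff ℂ (dexp q.2)).comp
        (((MvPolynomial.aeval (σl q.1)).toLinearMap).comp M)
  have hker : LinearMap.ker Ψ ≠ ⊥ := by
    apply LinearMap.ker_ne_bot_of_finrank_lt (K := ℂ)
    simp [Module.finrank_pi]
  obtain ⟨c, hmem, hc0⟩ := (Submodule.ne_bot_iff _).mp hker
  have hΨ : Ψ c = 0 := LinearMap.mem_ker.mp hmem
  set F : R3 := ∑ k, MvPolynomial.monomial (expF k) (c k) with hFdef
  have hMc : M c = F := by
    simp [M, hFdef, LinearMap.sum_apply]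
  have hcoeff : ∀ k, MvPolynomial.coeff (expF k) F = c k := by
    intro k
    rw [hFdef, MvPolynomial.coeff_sum]
    simp [MvPolynomial.coeff_monomial, hexpF_inj.eq_iff]
  have hF0 : F ≠ 0 := by
    intro h
    exact hc0 (funext fun k => by rw [← hcoeff k, h]; simp)
  have hF3 : F.IsHomogeneous 3 :=
    IsHomogeneous.sum _ _ _ (fun k _ => isHomogeneous_monomial _ (hdeg k))
  refine ⟨F, hF0, hF3, ?_⟩
  intro i w hw
  obtain ⟨a, bb, hab⟩ := huv i w hw
  set p : MvPolynomial (Fin 2) ℂ := MvPolynomial.aeval (σl i) F with hpdef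
  have hp3 : p.IsHomogeneous 3 := by
    have h1 : ∀ j, (σl i j).IsHomogeneous 1 := fun j =>
      (isHomogeneous_C_mul_X _ _).add (isHomogeneous_C_mul_X _ _)
    simpa [hpdef] using hF3.aeval (σl i) h1
  have hpc : ∀ k : Fin 4, coeff (dexp k) p = 0 := by
    intro k
    have h := congrFun hΨ (i, k)
    simpa [Ψ, hMc, hpdef] using h
  have hp : p = 0 := by
    ext d
    rw [coeff_zero]
    by_cases hd : d.degree = 3
    · have hdsum : d 0 + d 1 = 3 := by
        rw [degree_eq, Fin.sum_univ_two] at hd; exact hd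
      have hklt : (d 0) < 4 := by omega
      have hde : d = dexp ⟨d 0, hklt⟩ := by
        ext j
        fin_cases j
        · simp [dexp, Finsupp.single_apply]
        · simp [dexp, Finsupp.single_apply]
          omega
      rw [hde]
      exact hpc _
    · exact hp3.coeff_eq_zero hd
  have hkey : eval w F = eval ![a, bb] p := by
    rw [hpdef, eval_aeval']
    have hfun : (fun s => eval ![a, bb] (σl i s)) = w := by
      funext s
      rw [hab]
      simp [σl]
      ring
    rw [hfun]
  rw [hkey, hp, map_zero]


lemma numeric (k : ℕ) (hk : 8 ≤ k) :
    3 * (3 * k + 3).choose 3 < 2 * (k * (k + 1) * (7 * k + 5)) := by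
  have h6 : (3*k+3).descFactorial 3 = 6 * (3*k+3).choose 3 := by
    rw [Nat.descFactorial_eq_factorial_mul_choose]; norm_num [Nat.factorial]
  have hP : (3*k+3).descFactorial 3 = (3*k+1) * ((3*k+2) * (3*k+3)) := by
    have h1 : 3*k+3-2 = 3*k+1 := by omega
    have h2 : 3*k+3-1 = 3*k+2 := by omega
    simp [Nat.descFactorial_succ, Nat.descFactorial_zero, h1, h2]
  have h1 : 8*k ≤ k*k := by nlinarith
  have h2 : 8*(k*k) ≤ k*(k*k) := by nlinarith
  have key : (3*k+1) * ((3*k+2) * (3*k+3)) < 4 * (k * (k+1) * (7*k+5)) := by nlinarith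
  rw [hP] at h6
  linarith

end Stmt4Aux

/-- For four pairwise skew lines and any `m ≥ 1`, the system `𝓛_{3m}(m,m,m,m)`
is nonempty: there is a nonzero form of degree `3m` with multiplicity `m` along all
four lines. Moreover for every `m ≥ 8` one has
`binom(3m+3,3) < (2/3)·m(m+1)(7m+5)` (stated multiplied through by 3),
so for `m ≥ 8` the system has negative virtual dimension, hence is special. -/
theorem stmt_4 (m : ℕ) (hm : 1 ≤ m) (L : Fin 4 → Submodule ℂ C4)
    (hdim : ∀ i, Module.finrank ℂ ↥(L i) = 2)
    (hskew : ∀ i j, i ≠ j → L i ⊓ L j = ⊥) :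
    (∃ F : R3, F ≠ 0 ∧ F.IsHomogeneous (3 * m) ∧
      ∀ i, F ∈ (lineIdeal (L i)) ^ m) ∧
    (∀ k : ℕ, 8 ≤ k → 3 * (3 * k + 3).choose 3 < 2 * (k * (k + 1) * (7 * k + 5))) := by
  constructor
  · obtain ⟨F, hF0, hF3, hvan⟩ := Stmt4Aux.exists_cubic L hdim
    refine ⟨F ^ m, pow_ne_zero m hF0, hF3.pow m, fun i => ?_⟩
    have hFI : F ∈ lineIdeal (L i) := fun w hw => hvan i w hw
    exact Ideal.pow_mem_pow hFI m
  · exact fun k hk => Stmt4Aux.numeric k hk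
end
end

section
/- Let L_1, L_2, L_3, L_4 ⊆ ℂ^4 be 2-dimensional linear subspaces (lines in P^3) which are pairwise disjoint. Then there exists a nonzero homogeneous polynomial F of degree 8 in ℂ[x_0,x_1,x_2,x_3] with F ∈ I(L_i)^3 for i = 1,2,3,4; that is, 𝓛_8(3,3,3,3) is nonempty, although binom(11,3) = 165 < 184 = 4·c_{3,8}, so this system has negative virtual dimension and hence is special. -/
open MvPolynomial

noncomputable section

/-- Restriction of a polynomial to the line spanned by `u, v`, as a polynomial in two
parameters. -/
def psi (u v : C4) : R3 →ₐ[ℂ] MvPolynomial (Fin 2) ℂ :=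
  aeval (fun j => MvPolynomial.C (u j) * X 0 + MvPolynomial.C (v j) * X 1)

lemma aeval_eq_eval'' (x : Fin 2 → ℂ) (p : MvPolynomial (Fin 2) ℂ) :
    (aeval x) p = eval x p := rfl

lemma eval_psi (u v : C4) (s t : ℂ) (Q : R3) :
    eval ![s, t] (psi u v Q) = eval (s • u + t • v) Q := by
  have h : ((aeval ![s, t] : MvPolynomial (Fin 2) ℂ →ₐ[ℂ] ℂ).comp (psi u v)) =
      aeval (s • u + t • v) := by
    apply MvPolynomial.algHom_ext
    intro j
    simp [psi]
    ring
  have := congrArg (fun f => (f : R3 →ₐ[ℂ] ℂ) Q) h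
  simpa [aeval_eq_eval''] using this

lemma mem_lineIdeal_of_psi_eq_zero {L : Submodule ℂ C4} {u v : C4}
    (hspan : Submodule.span ℂ {u, v} = L) {Q : R3} (h : psi u v Q = 0) :
    Q ∈ lineIdeal L := by
  rw [mem_lineIdeal_iff]
  intro w hw
  rw [← hspan, Submodule.mem_span_pair] at hw
  obtain ⟨s, t, rfl⟩ := hw
  rw [← eval_psi, h, map_zero]

lemma psi_isHomogeneous (u v : C4) {Q : R3} (hQ : Q.IsHomogeneous 2) :
    (psi u v Q).IsHomogeneous 2 := by
  have := hQ.aeval (fun j => MvPolynomial.C (u j) * X 0 + MvPolynomial.C (v j) * X 1)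
    (n := 1) (fun j => (isHomogeneous_C_mul_X (u j) (0 : Fin 2)).add (isHomogeneous_C_mul_X (v j) (1 : Fin 2)))
  simpa [psi] using this

/-- The three degree-2 exponent vectors in two variables. -/
def mono3 : Fin 3 → (Fin 2 →₀ ℕ) :=
  ![Finsupp.single 0 2, Finsupp.single 0 1 + Finsupp.single 1 1, Finsupp.single 1 2]

lemma finsupp_degree_eq {n : ℕ} (d : Fin n →₀ ℕ) : d.degree = ∑ i, d i := by
  rw [Finsupp.degree]
  exact Finset.sum_subset (Finset.subset_univ _)
    (fun i _ hi => Finsupp.notMem_support_iff.mp hi)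

lemma eq_zero_of_coeffs {p : MvPolynomial (Fin 2) ℂ} (hp : p.IsHomogeneous 2)
    (h : ∀ k, coeff (mono3 k) p = 0) : p = 0 := by
  ext d
  rw [coeff_zero]
  by_cases hd : d.degree = 2
  · have hsum : d 0 + d 1 = 2 := by
      rw [finsupp_degree_eq, Fin.sum_univ_two] at hd
      exact hd
    have h0 : d 0 ≤ 2 := by omega
    interval_cases h0 : d 0
    · have : d = mono3 2 := by
        ext i
        fin_cases i <;> simp [mono3] <;> omega
      rw [this]; exact h 2
    · have : d = mono3 1 := by
        ext i
        fin_cases i <;> simp [mono3] <;> omega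
      rw [this]; exact h 1
    · have : d = mono3 0 := by
        ext i
        fin_cases i <;> simp [mono3] <;> omega
      rw [this]; exact h 0
  · exact hp.coeff_eq_zero hd

/-- The ten degree-2 exponent vectors in four variables, as functions. -/
def expList : Fin 10 → (Fin 4 → ℕ) :=
  ![![2,0,0,0], ![1,1,0,0], ![1,0,1,0], ![1,0,0,1], ![0,2,0,0],
    ![0,1,1,0], ![0,1,0,1], ![0,0,2,0], ![0,0,1,1], ![0,0,0,2]]

def expE (k : Fin 10) : Fin 4 →₀ ℕ := Finsupp.equivFunOnFinite.symm (expList k)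

lemma expE_inj : Function.Injective expE := by
  have h1 : Function.Injective expList := by decide
  exact fun a b hab => h1 (Finsupp.equivFunOnFinite.symm.injective hab)

lemma expE_degree (k : Fin 10) : (expE k).degree = 2 := by
  rw [finsupp_degree_eq]
  have : ∀ i, expE k i = expList k i := fun i => rfl
  simp_rw [this]
  fin_cases k <;> decide

/-- Given three pairs of spanning vectors, there is a nonzero homogeneous quadric
whose restrictions to all three lines vanish. -/
lemma exists_quadric (u v : Fin 3 → C4) :
    ∃ Q : R3, Q ≠ 0 ∧ Q.IsHomogeneous 2 ∧ ∀ p, psi (u p) (v p) Q = 0 := by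
  set V := homogeneousSubmodule (Fin 4) ℂ 2 with hV
  let φ : V →ₗ[ℂ] (Fin 3 × Fin 3 → ℂ) :=
    LinearMap.pi (fun pk =>
      (lcoeff ℂ (mono3 pk.2)) ∘ₗ (psi (u pk.1) (v pk.1)).toLinearMap ∘ₗ V.subtype)
  -- the ten monomials of degree 2 are linearly independent in V
  have hmem : ∀ k, (monomial (expE k) (1 : ℂ) : R3) ∈ V :=
    fun k => (mem_homogeneousSubmodule _ _).2 (isHomogeneous_monomial 1 (expE_degree k))
  have hli : LinearIndependent ℂ (fun k : Fin 10 => (monomial (expE k) (1 : ℂ) : R3)) := by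
    have := (basisMonomials (Fin 4) ℂ).linearIndependent.comp expE expE_inj
    simpa [Function.comp_def, coe_basisMonomials] using this
  have hli' : LinearIndependent ℂ (fun k : Fin 10 => (⟨monomial (expE k) 1, hmem k⟩ : V)) :=
    LinearIndependent.of_comp V.subtype hli
  -- the kernel of φ is nontrivial
  have hker : LinearMap.ker φ ≠ ⊥ := by
    intro hk
    have h2 := hli'.map' φ hk
    have h3 := h2.fintype_card_le_finrank
    rw [Module.finrank_fintype_fun_eq_card] at h3
    simp at h3
  obtain ⟨Q, hQmem, hQne⟩ := (Submodule.ne_bot_iff _).mp hker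
  refine ⟨(Q : R3), ?_, Q.2, ?_⟩
  · simpa [Submodule.coe_eq_zero] using hQne
  · intro p
    apply eq_zero_of_coeffs (psi_isHomogeneous _ _ Q.2)
    intro k
    have := congrFun (LinearMap.mem_ker.mp hQmem) (p, k)
    simpa [φ] using this

/-- A product of elements of an ideal, over a finset, lies in the corresponding power. -/
lemma prod_mem_pow_card {ι : Type*} (s : Finset ι) (I : Ideal R3) (f : ι → R3)
    (h : ∀ j ∈ s, f j ∈ I) : (∏ j ∈ s, f j) ∈ I ^ s.card := by
  have := Ideal.prod_mem_prod (I := fun _ : ι => I) (x := f) h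
  simpa [Finset.prod_const] using this

/-- The system `𝓛_8(3,3,3,3)` is nonempty for four pairwise skew lines:
there is a nonzero degree-8 form with multiplicity 3 along each of the four lines,
although `binom(11,3) = 165 < 184 = 4·c_{3,8}` (with `c_{3,8} = 46`), so the
system has negative virtual dimension, hence is special. -/
theorem stmt_5 (L : Fin 4 → Submodule ℂ C4)
    (hdim : ∀ i, Module.finrank ℂ ↥(L i) = 2)
    (hskew : ∀ i j, i ≠ j → L i ⊓ L j = ⊥) :
    (∃ F : R3, F ≠ 0 ∧ F.IsHomogeneous 8 ∧ ∀ i, F ∈ (lineIdeal (L i)) ^ 3) ∧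
    Nat.choose 11 3 = 165 ∧ 4 * 46 = 184 ∧ Nat.choose 11 3 < 4 * 46 := by
  refine ⟨?_, by decide, by norm_num, by decide⟩
  -- choose spanning pairs for each line
  have hbasis : ∀ i, ∃ u v : C4, Submodule.span ℂ {u, v} = L i := by
    intro i
    obtain b := Module.finBasisOfFinrankEq ℂ (↥(L i)) (hdim i)
    refine ⟨(b 0 : C4), (b 1 : C4), ?_⟩
    have : Submodule.span ℂ (Set.range (fun j : Fin 2 => ((b j : C4)))) = L i := by
      rw [show (fun j : Fin 2 => ((b j : C4))) = (L i).subtype ∘ b from rfl,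
        Set.range_comp, ← Submodule.map_span, b.span_eq, Submodule.map_top,
        Submodule.range_subtype]
    have hset : ({(b 0 : C4), (b 1 : C4)} : Set C4) =
        Set.range (fun j : Fin 2 => ((b j : C4))) := by
      ext x
      simp only [Set.mem_insert_iff, Set.mem_singleton_iff, Set.mem_range]
      constructor
      · rintro (rfl | rfl)
        exacts [⟨0, rfl⟩, ⟨1, rfl⟩]
      · rintro ⟨j, rfl⟩
        fin_cases j
        · exact Or.inl rfl
        · exact Or.inr rfl
    rw [hset, this]
  choose u v hspan using hbasis
  -- for each index k, a quadric vanishing on the other three lines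
  have hquad : ∀ k : Fin 4, ∃ Q : R3, Q ≠ 0 ∧ Q.IsHomogeneous 2 ∧
      ∀ j, j ≠ k → Q ∈ lineIdeal (L j) := by
    intro k
    obtain ⟨Q, hQ0, hQh, hQv⟩ :=
      exists_quadric (fun p => u (k.succAbove p)) (fun p => v (k.succAbove p))
    refine ⟨Q, hQ0, hQh, ?_⟩
    intro j hj
    obtain ⟨p, rfl⟩ := Fin.exists_succAbove_eq hj
    exact mem_lineIdeal_of_psi_eq_zero (hspan _) (hQv p)
  choose Q hQ0 hQh hQmem using hquad
  refine ⟨∏ k, Q k, ?_, ?_, ?_⟩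
  · rw [Finset.prod_ne_zero_iff]
    exact fun k _ => hQ0 k
  · have := MvPolynomial.IsHomogeneous.prod Finset.univ Q (fun _ => 2)
      (fun k _ => hQh k)
    simpa using this
  · intro i
    rw [← Finset.mul_prod_erase Finset.univ Q (Finset.mem_univ i)]
    have hcard : (Finset.univ.erase i).card = 3 := by
      simp [Finset.card_erase_of_mem]
    have h2 : (∏ k ∈ Finset.univ.erase i, Q k) ∈ lineIdeal (L i) ^ 3 := by
      rw [← hcard]
      exact prod_mem_pow_card _ _ _ (fun j hj => hQmem j i (Finset.mem_erase.mp hj).1.symm)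
    exact Ideal.mul_mem_left _ _ h2
end
end

section
/- Let A = ℂ[[t]], S = A[x,y,z], and let M = (t, x, y, z) be the maximal ideal of S generated by x, y, z and the constant polynomial t. Let R be the localization of S at M, and let m, n ≥ 1 be integers. Then in R the ideals generated by (x,y)^m and (y − t, z)^n satisfy: their intersection equals their product, i.e. (x,y)^m R ∩ (y − t, z)^n R = ((x,y)^m · (y − t, z)^n) R. -/
open MvPolynomial

noncomputable section

/-- `S = ℂ[[t]][x,y,z]`, the polynomial ring in three variables (indexed by
`Fin 3`, with `x = X 0`, `y = X 1`, `z = X 2`) over the formal power series ring. -/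
abbrev S : Type := MvPolynomial (Fin 3) (PowerSeries ℂ)

/-- Evaluation `S → ℂ` at the point `t = x = y = z = 0`.  Its kernel is precisely
the maximal ideal `M = (t, x, y, z)` of `S`, so the set where `φ ≠ 0` is the
complement `S \ M`. -/
def phi : S →+* ℂ :=
  (PowerSeries.constantCoeff (R := ℂ)).comp (MvPolynomial.eval (0 : Fin 3 → PowerSeries ℂ))

/-- The multiplicative set `S \ M`, where `M = (t,x,y,z)` is the maximal ideal:
concretely, the polynomials not vanishing at `t = x = y = z = 0`. -/
def Mcompl : Submonoid S where
  carrier := {f | phi f ≠ 0}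
  one_mem' := by simp [Set.mem_setOf_eq, map_one]
  mul_mem' := by
    intro a b ha hb
    simp only [Set.mem_setOf_eq, map_mul] at *
    exact mul_ne_zero ha hb

/-- `R = S_M`, the localization of `S` at the maximal ideal `M = (t,x,y,z)`. -/
abbrev Rloc : Type := Localization Mcompl

noncomputable section AuxSection13
namespace Aux13

section UnivPart
open Polynomial
variable {P : Type*} [CommRing P]

/-- divisibility of low coefficients multiplies. -/
lemma dvd_coeff_mul (a : P) {i j : ℕ} {f g : P[X]}
    (hf : ∀ d, a ^ (i - d) ∣ f.coeff d) (hg : ∀ d, a ^ (j - d) ∣ g.coeff d) :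
    ∀ d, a ^ (i + j - d) ∣ (f * g).coeff d := by
  intro d
  rw [Polynomial.coeff_mul]
  refine Finset.dvd_sum ?_
  rintro ⟨u, v⟩ huv
  rw [Finset.HasAntidiagonal.mem_antidiagonal] at huv
  have h1 : i + j - d ≤ (i - u) + (j - v) := by omega
  calc a ^ (i + j - d) ∣ a ^ ((i - u) + (j - v)) := pow_dvd_pow a h1
    _ = a ^ (i - u) * a ^ (j - v) := pow_add a _ _
    _ ∣ f.coeff u * g.coeff v := mul_dvd_mul (hf u) (hg v)

/-- The ideal of polynomials whose `d`-th coefficient is divisible by `a^(i-d)`. -/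
def Tid (a : P) (i : ℕ) : Ideal P[X] where
  carrier := {f | ∀ d, a ^ (i - d) ∣ f.coeff d}
  add_mem' := fun hf hg d => by rw [Polynomial.coeff_add]; exact dvd_add (hf d) (hg d)
  zero_mem' := fun d => by simp
  smul_mem' := fun g f hf => by
    have hg : ∀ d, a ^ (0 - d) ∣ g.coeff d := fun d => by simp
    have := dvd_coeff_mul a hg hf
    simpa using this

lemma span_pow_le_Tid (a : P) (n : ℕ) :
    (Ideal.span {Polynomial.C a, Polynomial.X}) ^ n ≤ Tid a n := by
  induction n with
  | zero => intro f _ d; simp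
  | succ n ih =>
    rw [pow_succ]
    refine Ideal.mul_le.2 fun f hf g hg => ?_
    have hf' : f ∈ Tid a n := ih hf
    have hg' : g ∈ Tid a 1 := by
      revert hg
      have : Ideal.span {Polynomial.C a, Polynomial.X} ≤ Tid a 1 := by
        rw [Ideal.span_le]
        rintro p (rfl | rfl)
        · intro d
          rcases Nat.eq_zero_or_pos d with rfl | hd
          · simpa using dvd_refl a
          · rw [Polynomial.coeff_C, if_neg (Nat.pos_iff_ne_zero.1 hd)]
            exact dvd_zero _
        · intro d
          rcases eq_or_ne d 1 with rfl | hd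
          · simp
          · rw [Polynomial.coeff_X, if_neg (Ne.symm hd)]
            exact dvd_zero _
      exact fun hg => this hg
    exact fun d => dvd_coeff_mul a hf' hg' d

lemma reg_pow {I : Ideal P} {a : P} (hreg : ∀ h, a * h ∈ I → h ∈ I) :
    ∀ (e : ℕ) (h : P), a ^ e * h ∈ I → h ∈ I := by
  intro e
  induction e with
  | zero => intro h; simpa using id
  | succ e ih =>
    intro h hh
    rw [pow_succ, mul_assoc] at hh
    exact hreg h (ih _ hh)

/-- Key polynomial-ring lemma. -/
lemma inf_le_mul_poly (I : Ideal P) (a : P) (m n : ℕ)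
    (hreg : ∀ h, a * h ∈ I ^ m → h ∈ I ^ m) :
    (Ideal.map (Polynomial.C (R := P)) I) ^ m ⊓ (Ideal.span {Polynomial.C a, Polynomial.X}) ^ n ≤
      (Ideal.map (Polynomial.C (R := P)) I) ^ m *
        (Ideal.span {Polynomial.C a, Polynomial.X}) ^ n := by
  rintro f ⟨hf1, hf2⟩
  rw [← Ideal.map_pow] at hf1
  have hc : ∀ k, f.coeff k ∈ I ^ m := fun k => (Ideal.mem_map_C_iff).1 hf1 k
  have hd : ∀ k, a ^ (n - k) ∣ f.coeff k := span_pow_le_Tid a n hf2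
  set J : Ideal P[X] := Ideal.span {Polynomial.C a, Polynomial.X} with hJ
  have hCa : Polynomial.C a ∈ J := Ideal.subset_span (by simp)
  have hX : (Polynomial.X : P[X]) ∈ J := Ideal.subset_span (by simp)
  have hfs := f.as_sum_support_C_mul_X_pow
  rw [hfs]
  refine Ideal.sum_mem _ fun k _ => ?_
  rcases lt_or_ge k n with hk | hk
  · obtain ⟨h, hh⟩ := hd k
    have hmem : h ∈ I ^ m := reg_pow hreg (n - k) h (hh ▸ hc k)
    have : Polynomial.C (f.coeff k) * Polynomial.X ^ k =
        Polynomial.C h * (Polynomial.C a ^ (n - k) * Polynomial.X ^ k) := by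
      rw [hh]; push_cast [map_mul, map_pow]; ring
    rw [this]
    refine Ideal.mul_mem_mul ?_ ?_
    · rw [← Ideal.map_pow]
      exact Ideal.mem_map_of_mem _ hmem
    · have : Polynomial.C a ^ (n - k) * Polynomial.X ^ k ∈ J ^ (n - k) * J ^ k :=
        Ideal.mul_mem_mul (Ideal.pow_mem_pow hCa _) (Ideal.pow_mem_pow hX _)
      rwa [← pow_add, Nat.sub_add_cancel hk.le] at this
  · have : Polynomial.C (f.coeff k) * Polynomial.X ^ k =
        (Polynomial.C (f.coeff k) * Polynomial.X ^ (k - n)) * Polynomial.X ^ n := by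
      rw [mul_assoc, ← pow_add, Nat.sub_add_cancel hk]
    rw [this]
    refine Ideal.mul_mem_mul ?_ (Ideal.pow_mem_pow hX _)
    refine Ideal.mul_mem_right _ _ ?_
    rw [← Ideal.map_pow]
    exact Ideal.mem_map_of_mem _ (hc k)
end UnivPart

section MvPart
open MvPolynomial
variable {A : Type*} [CommRing A]

/-- Low-degree coefficient vanishing predicate: `f ∈ (X 0, X 1)^m` iff `Km m f`. -/
def Km (m : ℕ) (f : MvPolynomial (Fin 2) A) : Prop :=
  ∀ d : Fin 2 →₀ ℕ, d 0 + d 1 < m → coeff d f = 0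

lemma Km_mul {i j : ℕ} {f g : MvPolynomial (Fin 2) A} (hf : Km i f) (hg : Km j g) :
    Km (i + j) (f * g) := by
  intro d hd
  rw [coeff_mul]
  refine Finset.sum_eq_zero ?_
  rintro ⟨u, v⟩ huv
  rw [Finset.HasAntidiagonal.mem_antidiagonal] at huv
  have h0 : u 0 + v 0 = d 0 := by rw [← huv]; simp
  have h1 : u 1 + v 1 = d 1 := by rw [← huv]; simp
  rcases lt_or_ge (u 0 + u 1) i with h | h
  · rw [hf u h, zero_mul]
  · rw [hg v (by omega), mul_zero]

lemma Km_of_mem_span {f : MvPolynomial (Fin 2) A}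
    (hf : f ∈ Ideal.span {(X 0 : MvPolynomial (Fin 2) A), X 1}) : Km 1 f := by
  have : Ideal.span {(X 0 : MvPolynomial (Fin 2) A), X 1} ≤
      RingHom.ker (constantCoeff : MvPolynomial (Fin 2) A →+* A) := by
    rw [Ideal.span_le]
    rintro p (rfl | rfl) <;> simp [RingHom.mem_ker]
  intro d hd
  have hd0 : d = 0 := by
    have h0 : d 0 = 0 := by omega
    have h1 : d 1 = 0 := by omega
    ext i
    fin_cases i
    · simpa using h0
    · simpa using h1
  subst hd0
  simpa [RingHom.mem_ker, constantCoeff_eq] using this hf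

lemma Km_of_mem_pow {m : ℕ} {f : MvPolynomial (Fin 2) A}
    (hf : f ∈ (Ideal.span {(X 0 : MvPolynomial (Fin 2) A), X 1}) ^ m) : Km m f := by
  induction m generalizing f with
  | zero => intro d hd; omega
  | succ m ih =>
    rw [pow_succ] at hf
    refine Submodule.mul_induction_on hf ?_ ?_
    · intro p hp q hq
      exact Km_mul (ih hp) (Km_of_mem_span hq)
    · intro p q hp hq d hd
      rw [coeff_add, hp d hd, hq d hd, add_zero]

lemma monomial_mem_pow {m : ℕ} (v : Fin 2 →₀ ℕ) (c : A) (hv : m ≤ v 0 + v 1) :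
    (monomial v c : MvPolynomial (Fin 2) A) ∈
      (Ideal.span {(X 0 : MvPolynomial (Fin 2) A), X 1}) ^ m := by
  induction m generalizing v with
  | zero => simp
  | succ m ih =>
    have hex : ∃ i : Fin 2, 1 ≤ v i := by
      by_contra h
      push_neg at h
      have h0 := h 0; have h1 := h 1; omega
    obtain ⟨i, hi⟩ := hex
    have hle : Finsupp.single i 1 ≤ v := by
      rw [Finsupp.single_le_iff]; exact hi
    have hv' : v = (v - Finsupp.single i 1) + Finsupp.single i 1 :=
      (tsub_add_cancel_of_le hle).symm
    have heq : (monomial v c : MvPolynomial (Fin 2) A) =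
        monomial (v - Finsupp.single i 1) c * X i ^ 1 := by
      rw [← monomial_add_single, ← hv']
    rw [heq, pow_one, pow_succ]
    refine Ideal.mul_mem_mul (ih _ ?_) ?_
    · have e0 := Finsupp.tsub_apply v (Finsupp.single i 1) (0 : Fin 2)
      have e1 := Finsupp.tsub_apply v (Finsupp.single i 1) (1 : Fin 2)
      fin_cases i <;> simp [Finsupp.single_apply] at e0 e1 hi ⊢ <;> omega
    · fin_cases i <;> exact Ideal.subset_span (by simp)

lemma mem_pow_of_Km {m : ℕ} {f : MvPolynomial (Fin 2) A} (hf : Km m f) :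
    f ∈ (Ideal.span {(X 0 : MvPolynomial (Fin 2) A), X 1}) ^ m := by
  have hfs := f.as_sum
  rw [hfs]
  refine Ideal.sum_mem _ fun v hv => ?_
  refine monomial_mem_pow v _ ?_
  by_contra h
  push_neg at h
  exact (mem_support_iff.1 hv) (hf v h)

/-- `y - t` is a nonzerodivisor mod `(x,y)^m`, for `t ≠ 0` in a domain. -/
lemma reg_sub [IsDomain A] {t : A} (ht : t ≠ 0) (m : ℕ) (h : MvPolynomial (Fin 2) A)
    (hh : (X 1 - C t) * h ∈ (Ideal.span {(X 0 : MvPolynomial (Fin 2) A), X 1}) ^ m) :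
    h ∈ (Ideal.span {(X 0 : MvPolynomial (Fin 2) A), X 1}) ^ m := by
  have H : Km m ((X 1 - C t) * h) := Km_of_mem_pow hh
  refine mem_pow_of_Km ?_
  have key : ∀ k : ℕ, ∀ d : Fin 2 →₀ ℕ, d 0 + d 1 = k → d 0 + d 1 < m → coeff d h = 0 := by
    intro k
    induction k using Nat.strong_induction_on with
    | _ k ih =>
      intro d hdk hdm
      have h2 : coeff d ((X 1 - C t) * h) = 0 := H d hdm
      rw [sub_mul, coeff_sub, coeff_C_mul, coeff_X_mul'] at h2
      by_cases h1 : (1 : Fin 2) ∈ d.support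
      · have hd1 : 1 ≤ d 1 := by
          rwa [Finsupp.mem_support_iff, ← Nat.pos_iff_ne_zero] at h1
        have e0 : (d - Finsupp.single 1 1 : Fin 2 →₀ ℕ) 0 = d 0 := by
          simp [Finsupp.tsub_apply, Finsupp.single_apply, Fin.ext_iff]
        have e1 : (d - Finsupp.single 1 1 : Fin 2 →₀ ℕ) 1 = d 1 - 1 := by
          simp [Finsupp.tsub_apply, Finsupp.single_apply]
        have hz : coeff (d - Finsupp.single 1 1) h = 0 := by
          refine ih (d 0 + (d 1 - 1)) (by omega) _ (by omega) (by omega)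
        rw [if_pos h1, hz, zero_sub, neg_eq_zero] at h2
        rcases mul_eq_zero.1 h2 with h | h
        · exact absurd h ht
        · exact h
      · rw [if_neg h1, zero_sub, neg_eq_zero] at h2
        rcases mul_eq_zero.1 h2 with h | h
        · exact absurd h ht
        · exact h
  exact fun d hd => key (d 0 + d 1) d rfl hd

abbrev A13 : Type := PowerSeries ℂ
abbrev P13 : Type := MvPolynomial (Fin 2) A13
abbrev S13 : Type := MvPolynomial (Fin 3) A13

def eqv : S13 ≃ₐ[A13] Polynomial P13 :=
  (renameEquiv A13 (finRotate 3)).trans (finSuccEquiv A13 2)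

lemma eqv_X0 : eqv (X 0) = Polynomial.C (X 0) := by
  have h : finRotate 3 0 = ((0 : Fin 2).succ) := by decide
  have h2 := finSuccEquiv_X_succ (R := A13) (n := 2) (j := 0)
  simp only [eqv, AlgEquiv.trans_apply, renameEquiv_apply, rename_X, h, h2]

lemma eqv_X1 : eqv (X 1) = Polynomial.C (X 1) := by
  have h : finRotate 3 1 = ((1 : Fin 2).succ) := by decide
  have h2 := finSuccEquiv_X_succ (R := A13) (n := 2) (j := 1)
  simp only [eqv, AlgEquiv.trans_apply, renameEquiv_apply, rename_X, h, h2]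

lemma eqv_X2 : eqv (X 2) = Polynomial.X := by
  have h : finRotate 3 2 = (0 : Fin 3) := by decide
  simp [eqv, h, finSuccEquiv_X_zero]

lemma eqv_C (a : A13) : eqv (C a) = Polynomial.C (C a) := by
  have h1 : (C a : S13) = algebraMap A13 S13 a := rfl
  rw [h1, AlgEquiv.commutes, Polynomial.algebraMap_apply]
  rfl


def IS : Ideal S13 := Ideal.span {X 0, X 1}
def JS : Ideal S13 := Ideal.span {(X 1 : S13) - C PowerSeries.X, X 2}
def IP : Ideal P13 := Ideal.span {X 0, X 1}
def aP : P13 := (X 1 : P13) - C PowerSeries.X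
def JQ : Ideal (Polynomial P13) := Ideal.span {Polynomial.C aP, Polynomial.X}

def eqvR : S13 →+* Polynomial P13 := (eqv : S13 ≃+* Polynomial P13).toRingHom

lemma eqvR_apply (f : S13) : eqvR f = eqv f := rfl

lemma eqvR_surj : Function.Surjective eqvR := fun y => ⟨eqv.symm y, by
  rw [eqvR_apply]; exact eqv.apply_symm_apply y⟩

lemma eqvR_inj : Function.Injective eqvR := fun a b h => by
  have : eqv a = eqv b := by rw [← eqvR_apply, ← eqvR_apply, h]
  exact eqv.injective this

lemma map_eqv_I : Ideal.map eqvR IS = Ideal.map (Polynomial.C (R := P13)) IP := by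
  rw [IS, IP, Ideal.map_span, Ideal.map_span]
  congr 1
  rw [Set.image_insert_eq, Set.image_singleton, Set.image_insert_eq, Set.image_singleton]
  have h0 : eqvR (X 0) = Polynomial.C (X 0) := eqv_X0
  have h1 : eqvR (X 1) = Polynomial.C (X 1) := eqv_X1
  rw [h0, h1]

lemma map_eqv_J : Ideal.map eqvR JS = JQ := by
  rw [JS, JQ, Ideal.map_span]
  congr 1
  rw [Set.image_insert_eq, Set.image_singleton]
  have h1 : eqvR ((X 1 : S13) - C PowerSeries.X) = Polynomial.C aP := by
    have : eqvR ((X 1 : S13) - C PowerSeries.X) = eqvR (X 1) - eqvR (C PowerSeries.X) :=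
      map_sub eqvR _ _
    rw [this]
    have h1 : eqvR (X 1) = Polynomial.C (X 1) := eqv_X1
    have h2 : eqvR (C PowerSeries.X) = Polynomial.C (C PowerSeries.X) := eqv_C _
    rw [h1, h2, aP, map_sub]
  have h2 : eqvR (X 2) = Polynomial.X := eqv_X2
  rw [h1, h2]

lemma S_inf_le (m n : ℕ) : IS ^ m ⊓ JS ^ n ≤ IS ^ m * JS ^ n := by
  rintro f ⟨h1, h2⟩
  have hm1 : eqvR f ∈ (Ideal.map (Polynomial.C (R := P13)) IP) ^ m := by
    rw [← map_eqv_I, ← Ideal.map_pow]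
    exact Ideal.mem_map_of_mem _ h1
  have hm2 : eqvR f ∈ JQ ^ n := by
    rw [← map_eqv_J, ← Ideal.map_pow]
    exact Ideal.mem_map_of_mem _ h2
  have hreg : ∀ h, aP * h ∈ IP ^ m → h ∈ IP ^ m := by
    intro h hh
    exact reg_sub (PowerSeries.X_ne_zero) m h hh
  have hkey := inf_le_mul_poly IP aP m n hreg ⟨hm1, hm2⟩
  have hkey2 : eqvR f ∈ Ideal.map eqvR (IS ^ m * JS ^ n) := by
    rw [Ideal.map_mul, Ideal.map_pow, Ideal.map_pow, map_eqv_I, map_eqv_J]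
    exact hkey
  obtain ⟨g, hgK, hgf⟩ := (Ideal.mem_map_iff_of_surjective eqvR eqvR_surj).1 hkey2
  rwa [← eqvR_inj hgf]
end MvPart
end Aux13
end AuxSection13

/-- In the localization `R` of `S = ℂ[[t]][x,y,z]` at the maximal ideal
`M = (t,x,y,z)`, the ideals generated by `(x,y)^m` and `(y - t, z)^n` satisfy:
their intersection equals their product,
`(x,y)^m R ∩ (y - t, z)^n R = ((x,y)^m · (y - t, z)^n) R`. -/
theorem stmt_13 (m n : ℕ) (hm : 1 ≤ m) (hn : 1 ≤ n) :
    Ideal.map (algebraMap S Rloc) ((Ideal.span {(X 0 : S), X 1}) ^ m) ⊓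
      Ideal.map (algebraMap S Rloc)
        ((Ideal.span {(X 1 : S) - C PowerSeries.X, X 2}) ^ n) =
    Ideal.map (algebraMap S Rloc)
      ((Ideal.span {(X 0 : S), X 1}) ^ m *
        (Ideal.span {(X 1 : S) - C PowerSeries.X, X 2}) ^ n) := by
  apply le_antisymm
  · rintro ξ ⟨h1, h2⟩
    obtain ⟨⟨a1, s1⟩, e1⟩ := (IsLocalization.mem_map_algebraMap_iff Mcompl Rloc).1 h1
    obtain ⟨⟨a2, s2⟩, e2⟩ := (IsLocalization.mem_map_algebraMap_iff Mcompl Rloc).1 h2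
    have hMle : Mcompl ≤ nonZeroDivisors S := by
      intro s hs
      refine mem_nonZeroDivisors_of_ne_zero fun h => ?_
      have hps : phi s ≠ 0 := hs
      exact hps (by rw [h, map_zero])
    have hinj := IsLocalization.injective Rloc hMle
    have hg : (a1 : S) * (s2 : S) = (a2 : S) * (s1 : S) := by
      apply hinj
      rw [map_mul, map_mul, ← e1, ← e2]
      ring
    have hgI : (a1 : S) * (s2 : S) ∈ (Ideal.span {(X 0 : S), X 1}) ^ m :=
      Ideal.mul_mem_right _ _ a1.2
    have hgJ : (a1 : S) * (s2 : S) ∈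
        (Ideal.span {(X 1 : S) - C PowerSeries.X, X 2}) ^ n := by
      rw [hg]
      exact Ideal.mul_mem_right _ _ a2.2
    have hgP : (a1 : S) * (s2 : S) ∈
        (Ideal.span {(X 0 : S), X 1}) ^ m *
          (Ideal.span {(X 1 : S) - C PowerSeries.X, X 2}) ^ n :=
      Aux13.S_inf_le m n ⟨hgI, hgJ⟩
    have hξ : ξ * algebraMap S Rloc ((s1 : S) * (s2 : S)) =
        algebraMap S Rloc ((a1 : S) * (s2 : S)) := by
      rw [map_mul, map_mul, ← mul_assoc, e1]
    obtain ⟨u, hu'⟩ := IsLocalization.map_units Rloc (s1 * s2)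
    have hs12 : ((s1 * s2 : Mcompl) : S) = (s1 : S) * (s2 : S) := rfl
    have hξ2 : ξ = algebraMap S Rloc ((a1 : S) * (s2 : S)) * ↑u⁻¹ := by
      calc ξ = ξ * (↑u * ↑u⁻¹) := by rw [Units.mul_inv, mul_one]
        _ = ξ * algebraMap S Rloc ((s1 : S) * (s2 : S)) * ↑u⁻¹ := by
              rw [← mul_assoc, hu', hs12]
        _ = algebraMap S Rloc ((a1 : S) * (s2 : S)) * ↑u⁻¹ := by rw [hξ]
    rw [hξ2]
    exact Ideal.mul_mem_right _ _ (Ideal.mem_map_of_mem _ hgP)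
  · rw [Ideal.map_mul]
    exact Ideal.mul_le_inf
end
end
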